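/- Let E ⊂ ℝ^{n+1} be a closed set with diam(E) < ∞, set δ(X) = dist(X,E), and suppose u is harmonic and bounded on ℝ^{n+1} \ E with ‖u‖_∞ = 1. Fix y ∈ E and r ≥ 100 diam(E), and set r₀ = 10 diam(E). Then ∬_{B(y,r) \ B(y,r₀)} |∇u(X)|² δ(X) dX ≤ C r^n, where C depends only on n. (The proof decomposes the annulus into dyadic annuli, applies Caccioppoli's inequality on each, uses δ(X) ≈ |X−y| when |X−y| ≥ 10 diam(E), and sums a geometric series.) -/

import Mathlib

open MeasureTheory Metric Set
open scoped NNReal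
open scoped ENNReal
noncomputable section

abbrev Euc (n : ℕ) := EuclideanSpace ℝ (Fin (n + 1))

/-- The Laplacian of `u`, computed in coordinates. -/
noncomputable def lap {n : ℕ} (u : Euc n → ℝ) (x : Euc n) : ℝ :=
  ∑ i : Fin (n + 1),
    fderiv ℝ (fun y => fderiv ℝ u y (EuclideanSpace.single i (1 : ℝ))) x
      (EuclideanSpace.single i (1 : ℝ))

/-- `u` is harmonic on `s`: twice continuously differentiable with vanishing Laplacian. -/
def HarmonicOn {n : ℕ} (u : Euc n → ℝ) (s : Set (Euc n)) : Prop :=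
  ContDiffOn ℝ 2 u s ∧ ∀ x ∈ s, lap u x = 0

/-- Sum of squares of coordinates of a functional equals its norm squared. -/
lemma norm_clm_sq {n : ℕ} (L : Euc n →L[ℝ] ℝ) :
    ∑ i : Fin (n + 1), (L (EuclideanSpace.single i (1:ℝ)))^2 = ‖L‖^2 := by
  set v : Euc n := (InnerProductSpace.toDual ℝ (Euc n)).symm L with hv
  have hLv : ∀ w, L w = inner ℝ v w := fun w => (InnerProductSpace.toDual_symm_apply).symm
  have hnorm : ‖L‖ = ‖v‖ := by
    rw [hv, LinearIsometryEquiv.norm_map]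
  have hcoord : ∀ i, L (EuclideanSpace.single i (1:ℝ)) = v i := by
    intro i
    rw [hLv, EuclideanSpace.inner_single_right]
    simp
  simp_rw [hcoord]
  rw [hnorm, EuclideanSpace.norm_eq]
  rw [Real.sq_sqrt (by positivity)]
  simp [sq_abs]

/-- Gluing continuity. -/
lemma cont_glue {n : ℕ} {g : Euc n → ℝ} {s t : Set (Euc n)} (hs : IsOpen s) (ht : IsOpen t)
    (hg : ContinuousOn g s) (h0 : ∀ x ∈ t, g x = 0) (hcover : ∀ x, x ∈ s ∨ x ∈ t) :
    Continuous g := by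
  rw [continuous_iff_continuousAt]
  intro x
  rcases hcover x with hx | hx
  · exact hg.continuousAt (hs.mem_nhds hx)
  · have : g =ᶠ[nhds x] (fun _ => 0) := by
      filter_upwards [ht.mem_nhds hx] with z hz using h0 z hz
    exact (continuousAt_const.congr this.symm)

/-- Integration by parts (divergence theorem for compactly supported fields) on `ℝ^{n+1}` pi. -/
lemma ibp_pi {n : ℕ} (f : Fin (n + 1) → (Fin (n + 1) → ℝ) → ℝ)
    (hd : ∀ i x, DifferentiableAt ℝ (f i) x)
    (hsupp : ∀ i, HasCompactSupport (f i))
    (hcont : Continuous (fun x => ∑ i, fderiv ℝ (f i) x (Pi.single i 1))) :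
    ∫ x, ∑ i, fderiv ℝ (f i) x (Pi.single i 1) = 0 := by
  classical
  set K : Set (Fin (n+1) → ℝ) := ⋃ i, tsupport (f i) with hK
  have hKc : IsCompact K := isCompact_iUnion (fun i => hsupp i)
  obtain ⟨R, hR0, hRK⟩ : ∃ R : ℝ, 0 < R ∧ K ⊆ ball 0 R := by
    rcases hKc.isBounded.subset_ball 0 with ⟨R, hR⟩
    exact ⟨max R 1, lt_of_lt_of_le one_pos (le_max_right _ _),
      hR.trans (ball_subset_ball (le_max_left _ _))⟩
  set a : Fin (n+1) → ℝ := fun _ => -R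
  set b : Fin (n+1) → ℝ := fun _ => R
  have hle : a ≤ b := fun i => by simp [a, b]; linarith
  -- divergence vanishes off K
  have hzero : ∀ i x, x ∉ K → fderiv ℝ (f i) x = 0 := by
    intro i x hx
    have hxn : x ∉ tsupport (f i) := fun h => hx (mem_iUnion.2 ⟨i, h⟩)
    have : f i =ᶠ[nhds x] (fun _ => 0) := by
      filter_upwards [(isClosed_tsupport (f i)).isOpen_compl.mem_nhds hxn] with z hz
      exact image_eq_zero_of_notMem_tsupport hz
    rw [this.fderiv_eq, fderiv_fun_const]
    rfl
  have hKIcc : K ⊆ Set.Icc a b := by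
    intro x hx
    have := hRK hx
    rw [mem_ball, dist_zero_right] at this
    constructor <;> intro i <;>
      have hxi : |x i| ≤ ‖x‖ := by
        simpa using norm_le_pi_norm x i
    · simp only [a]; cases abs_le.1 (hxi.trans this.le) with
      | _ h1 h2 => linarith
    · simp only [b]; cases abs_le.1 (hxi.trans this.le) with
      | _ h1 h2 => linarith
  have Hi : IntegrableOn (fun x => ∑ i, fderiv ℝ (f i) x (Pi.single i 1)) (Set.Icc a b)
      volume := hcont.integrableOn_Icc
  have hdiff : ∀ i, Differentiable ℝ (f i) := fun i x => hd i x
  have key := MeasureTheory.integral_divergence_of_hasFDerivAt_off_countable' a b hle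
    f (fun i x => fderiv ℝ (f i) x) ∅ countable_empty
    (fun i => (hdiff i).continuous.continuousOn)
    (fun x _ i => (hd i x).hasFDerivAt) Hi
  have hface : ∀ (i : Fin (n+1)) (c : ℝ), |c| = R →
      ∀ z : Fin n → ℝ, f i (i.insertNth c z) = 0 := by
    intro i c hc z
    apply image_eq_zero_of_notMem_tsupport
    intro hmem
    have h1 : (i.insertNth c z : Fin (n+1) → ℝ) ∈ ball (0 : Fin (n+1) → ℝ) R :=
      hRK (mem_iUnion.2 ⟨i, hmem⟩)
    rw [mem_ball, dist_zero_right] at h1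
    have h2 : |(i.insertNth c z : Fin (n+1) → ℝ) i| ≤ ‖(i.insertNth c z : Fin (n+1) → ℝ)‖ := by
      simpa using norm_le_pi_norm (i.insertNth c z : Fin (n+1) → ℝ) i
    rw [Fin.insertNth_apply_same] at h2
    rw [hc] at h2
    linarith
  have hfaces : ∑ i : Fin (n + 1),
      ((∫ x in Set.Icc (a ∘ i.succAbove) (b ∘ i.succAbove), f i (i.insertNth (b i) x)) -
        ∫ x in Set.Icc (a ∘ i.succAbove) (b ∘ i.succAbove), f i (i.insertNth (a i) x)) = 0 := by
    apply Finset.sum_eq_zero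
    intro i _
    have e1 : ∀ x : Fin n → ℝ, f i (i.insertNth (b i) x) = 0 := by
      intro x; exact hface i (b i) (by simp [b, abs_of_pos hR0]) x
    have e2 : ∀ x : Fin n → ℝ, f i (i.insertNth (a i) x) = 0 := by
      intro x; exact hface i (a i) (by simp [a, abs_of_pos hR0]) x
    simp [e1, e2]
  rw [hfaces] at key
  rw [← MeasureTheory.setIntegral_eq_integral_of_forall_compl_eq_zero (s := Set.Icc a b)]
  · exact key
  · intro x hx
    have hxK : x ∉ K := fun h => hx (hKIcc h)
    apply Finset.sum_eq_zero
    intro i _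
    rw [hzero i x hxK]
    rfl

/-- Integration by parts on `Euc n`. -/
lemma ibp {n : ℕ} (f : Fin (n + 1) → Euc n → ℝ)
    (hd : ∀ i x, DifferentiableAt ℝ (f i) x)
    (hsupp : ∀ i, HasCompactSupport (f i))
    (hcont : Continuous (fun x => ∑ i, fderiv ℝ (f i) x (EuclideanSpace.single i (1:ℝ)))) :
    ∫ x, ∑ i, fderiv ℝ (f i) x (EuclideanSpace.single i (1:ℝ)) = 0 := by
  classical
  set ι : (Fin (n+1) → ℝ) → Euc n := ⇑((EuclideanSpace.equiv (Fin (n+1)) ℝ).symm) with hι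
  have hι_clm : ∀ x, HasFDerivAt ι ((EuclideanSpace.equiv (Fin (n+1)) ℝ).symm :
      (Fin (n+1) → ℝ) →L[ℝ] Euc n) x := by
    intro x
    exact (EuclideanSpace.equiv (Fin (n+1)) ℝ).symm.hasFDerivAt
  have hsingle : ∀ i : Fin (n+1), ι (Pi.single i 1) = EuclideanSpace.single i (1:ℝ) := by
    intro i; rfl
  set F : Fin (n+1) → (Fin (n+1) → ℝ) → ℝ := fun i z => f i (ι z) with hF
  have hFd : ∀ i z, DifferentiableAt ℝ (F i) z := by
    intro i z
    exact (hd i (ι z)).comp z ((EuclideanSpace.equiv (Fin (n+1)) ℝ).symm.differentiableAt)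
  have hFder : ∀ i z, fderiv ℝ (F i) z =
      (fderiv ℝ (f i) (ι z)).comp ((EuclideanSpace.equiv (Fin (n+1)) ℝ).symm :
        (Fin (n+1) → ℝ) →L[ℝ] Euc n) := by
    intro i z
    exact (((hd i (ι z)).hasFDerivAt).comp z (hι_clm z)).fderiv
  have hdiv : ∀ z, ∑ i, fderiv ℝ (F i) z (Pi.single i 1) =
      ∑ i, fderiv ℝ (f i) (ι z) (EuclideanSpace.single i (1:ℝ)) := by
    intro z
    apply Finset.sum_congr rfl
    intro i _
    rw [hFder]
    simp only [ContinuousLinearMap.coe_comp', Function.comp_apply]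
    congr 1
  have hFsupp : ∀ i, HasCompactSupport (F i) := by
    intro i
    exact (hsupp i).comp_homeomorph
      ((EuclideanSpace.equiv (Fin (n+1)) ℝ).symm.toHomeomorph)
  have hFcont : Continuous (fun z => ∑ i, fderiv ℝ (F i) z (Pi.single i 1)) := by
    simp_rw [hdiv]
    exact hcont.comp (EuclideanSpace.equiv (Fin (n+1)) ℝ).symm.continuous
  have h0 := ibp_pi F hFd hFsupp hFcont
  have htrans := (PiLp.volume_preserving_toLp (Fin (n+1))).integral_comp
    (MeasurableEquiv.toLp 2 (Fin (n+1) → ℝ)).measurableEmbedding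
    (fun x => ∑ i, fderiv ℝ (f i) x (EuclideanSpace.single i (1:ℝ)))
  rw [← htrans]
  rw [← h0]
  apply integral_congr_ae
  filter_upwards with z
  exact (hdiv z).symm

/-- 1-D profile. -/
def psi : ℝ → ℝ := fun t => Real.smoothTransition (4*t - 1) * Real.smoothTransition (2 - t)

lemma psi_contDiff : ContDiff ℝ 2 psi := by
  apply ContDiff.mul
  · exact Real.smoothTransition.contDiff.comp (by fun_prop)
  · exact Real.smoothTransition.contDiff.comp (by fun_prop)

lemma psi_nonneg (t : ℝ) : 0 ≤ psi t :=
  mul_nonneg (Real.smoothTransition.nonneg _) (Real.smoothTransition.nonneg _)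

lemma psi_le_one (t : ℝ) : psi t ≤ 1 :=
  mul_le_one₀ (Real.smoothTransition.le_one _) (Real.smoothTransition.nonneg _)
    (Real.smoothTransition.le_one _)

lemma psi_one {t : ℝ} (h1 : 1/2 ≤ t) (h2 : t ≤ 1) : psi t = 1 := by
  unfold psi
  rw [Real.smoothTransition.one_of_one_le (by linarith),
    Real.smoothTransition.one_of_one_le (by linarith), mul_one]

lemma psi_zero_left {t : ℝ} (h : t ≤ 1/4) : psi t = 0 := by
  unfold psi
  rw [Real.smoothTransition.zero_of_nonpos (by linarith), zero_mul]

lemma psi_zero_right {t : ℝ} (h : 2 ≤ t) : psi t = 0 := by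
  unfold psi
  rw [Real.smoothTransition.zero_of_nonpos (x := 2 - t) (by linarith), mul_zero]

lemma psi_supp : Function.support psi ⊆ Set.Icc (1/4) 2 := by
  intro t ht
  by_contra h
  simp only [Set.mem_Icc, not_and_or, not_le] at h
  rcases h with h | h
  · exact ht (psi_zero_left h.le)
  · exact ht (psi_zero_right h.le)

lemma psi_hcs : HasCompactSupport psi :=
  HasCompactSupport.of_support_subset_isCompact isCompact_Icc psi_supp

lemma psi_lipschitz : ∃ M : ℝ≥0, 0 < M ∧ LipschitzWith M psi := by
  obtain ⟨C, hC⟩ := psi_contDiff.lipschitzWith_of_hasCompactSupport psi_hcs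
    (by norm_num)
  exact ⟨max C 1, lt_of_lt_of_le one_pos (le_max_right _ _),
    hC.weaken (le_max_left _ _)⟩

/-- Radial annular cutoff. -/
lemma cutoff {n : ℕ} : ∃ M : ℝ, 0 < M ∧ ∀ (y : Euc n) (ρ : ℝ), 0 < ρ →
    ∃ φ : Euc n → ℝ, ContDiff ℝ 2 φ ∧ HasCompactSupport φ ∧
      (∀ x, 0 ≤ φ x ∧ φ x ≤ 1) ∧
      (∀ x, ρ/2 ≤ dist x y → dist x y ≤ ρ → φ x = 1) ∧
      (tsupport φ ⊆ {x | ρ/4 ≤ dist x y ∧ dist x y ≤ 2*ρ}) ∧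
      (∀ x, ‖fderiv ℝ φ x‖ ≤ M / ρ) := by
  obtain ⟨M₀, hM₀, hlip⟩ := psi_lipschitz
  refine ⟨M₀, hM₀, ?_⟩
  intro y ρ hρ
  set φ : Euc n → ℝ := fun x => psi (dist x y / ρ) with hφdef
  have hsupp : Function.support φ ⊆ {x | ρ/4 ≤ dist x y ∧ dist x y ≤ 2*ρ} := by
    intro x hx
    have : dist x y / ρ ∈ Set.Icc (1/4 : ℝ) 2 :=
      psi_supp (show psi (dist x y / ρ) ≠ 0 from hx)
    rw [Set.mem_Icc] at this
    constructor
    · rw [div_le_div_iff₀ (by norm_num) hρ] at *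
      nlinarith [this.1, hρ]
    · nlinarith [this.2, hρ, (div_le_iff₀ hρ).1 this.2]
  have hts : tsupport φ ⊆ {x | ρ/4 ≤ dist x y ∧ dist x y ≤ 2*ρ} := by
    apply closure_minimal hsupp
    have : {x : Euc n | ρ/4 ≤ dist x y ∧ dist x y ≤ 2*ρ} =
        (closedBall y (2*ρ)) \ (ball y (ρ/4)) := by
      ext x
      simp [mem_closedBall, mem_ball, and_comm, not_lt]
    rw [this]
    exact (Metric.isClosed_closedBall).sdiff isOpen_ball
  have hcs : HasCompactSupport φ := by
    apply HasCompactSupport.of_support_subset_isCompact (isCompact_closedBall y (2*ρ))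
    intro x hx
    exact (hsupp hx).2
  have hlipφ : LipschitzWith (M₀ * (Real.toNNReal ρ)⁻¹) φ := by
    have h1 : LipschitzWith (Real.toNNReal ρ)⁻¹ (fun x : Euc n => dist x y / ρ) := by
      apply LipschitzWith.of_dist_le_mul
      intro x z
      simp only [Real.dist_eq, div_sub_div_same]
      rw [abs_div, abs_of_pos hρ, div_le_iff₀ hρ]
      have : (((Real.toNNReal ρ)⁻¹ : ℝ≥0) : ℝ) = ρ⁻¹ := by
        rw [NNReal.coe_inv, Real.coe_toNNReal _ hρ.le]
      rw [this]
      rw [mul_comm (ρ⁻¹) _, mul_assoc, inv_mul_cancel₀ hρ.ne', mul_one]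
      exact abs_dist_sub_le x z y
    exact hlip.comp h1
  have hconst : (↑(M₀ * (Real.toNNReal ρ)⁻¹) : ℝ) = M₀ / ρ := by
    push_cast
    rw [Real.coe_toNNReal _ hρ.le]
    ring
  refine ⟨φ, ?_, hcs, ?_, ?_, hts, ?_⟩
  · -- ContDiff
    rw [contDiff_iff_contDiffAt]
    intro x
    rcases lt_or_ge (dist x y) (ρ/4) with hx | hx
    · apply ContDiffAt.congr_of_eventuallyEq (contDiffAt_const (c := 0))
      have hball : ball y (ρ/4) ∈ nhds x := isOpen_ball.mem_nhds (by rwa [mem_ball])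
      filter_upwards [hball] with z hz
      rw [mem_ball] at hz
      exact psi_zero_left (by rw [div_le_div_iff₀ hρ (by norm_num)] at *; nlinarith)
    · have hne : x ≠ y := by
        intro h
        rw [h, dist_self] at hx
        linarith
      exact (psi_contDiff.contDiffAt).comp x
        (((contDiffAt_id.dist ℝ contDiffAt_const hne).div_const ρ))
  · exact fun x => ⟨psi_nonneg _, psi_le_one _⟩
  · intro x h1 h2
    exact psi_one (by rw [le_div_iff₀ hρ]; linarith) (by rw [div_le_one hρ]; linarith)
  · intro x
    calc ‖fderiv ℝ φ x‖ ≤ ↑(M₀ * (Real.toNNReal ρ)⁻¹) :=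
          norm_fderiv_le_of_lipschitz ℝ hlipφ
    _ = M₀ / ρ := hconst

lemma support_fderiv_sub {n : ℕ} {φ : Euc n → ℝ} (x : Euc n) (hx : x ∉ tsupport φ) :
    fderiv ℝ φ x = 0 := by
  have : φ =ᶠ[nhds x] (fun _ => 0) := by
    filter_upwards [(isClosed_tsupport φ).isOpen_compl.mem_nhds hx] with z hz
    exact image_eq_zero_of_notMem_tsupport hz
  rw [this.fderiv_eq, fderiv_fun_const]
  rfl

set_option maxHeartbeats 2000000 in
lemma cacc {n : ℕ} {s : Set (Euc n)} (hs : IsOpen s) {u : Euc n → ℝ}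
    (hu : ContDiffOn ℝ 2 u s) (hlap : ∀ x ∈ s, lap u x = 0)
    {φ : Euc n → ℝ} (hφ : ContDiff ℝ 2 φ) (hφc : HasCompactSupport φ)
    (hφs : tsupport φ ⊆ s) :
    Integrable (fun x => (φ x)^2 * ‖fderiv ℝ u x‖^2) ∧
    ∫ x, (φ x)^2 * ‖fderiv ℝ u x‖^2 ≤ 4 * ∫ x, (u x)^2 * ‖fderiv ℝ φ x‖^2 := by
  classical
  set e : Fin (n+1) → Euc n := fun i => EuclideanSpace.single i (1:ℝ) with he
  set Du := fderiv ℝ u with hDu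
  set Dφ := fderiv ℝ φ with hDφ
  have hφ0 : ∀ x, x ∉ tsupport φ → φ x = 0 := fun x hx => image_eq_zero_of_notMem_tsupport hx
  have hφ0' : ∀ x, x ∉ s → φ x = 0 := fun x hx => hφ0 x (fun h => hx (hφs h))
  have hDφ0 : ∀ x, x ∉ tsupport φ → Dφ x = 0 := fun x hx => support_fderiv_sub x hx
  have hDucont : ContinuousOn Du s := hu.continuousOn_fderiv_of_isOpen hs (by norm_num)
  have hDudiff : ContDiffOn ℝ 1 Du s := hu.fderiv_of_isOpen hs (by norm_num)
  have hDφcont : Continuous Dφ := hφ.continuous_fderiv (by norm_num)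
  have hφcont : Continuous φ := hφ.continuous
  have hucont : ContinuousOn u s := hu.continuousOn
  have hudiff : ∀ x ∈ s, DifferentiableAt ℝ u x := fun x hx =>
    (hu.contDiffAt (hs.mem_nhds hx)).differentiableAt (by norm_num)
  have hφdiff : Differentiable ℝ φ := hφ.differentiable (by norm_num)
  have hDidiff : ∀ (i : Fin (n+1)), ∀ x ∈ s, DifferentiableAt ℝ (fun z => Du z (e i)) x := by
    intro i x hx
    exact (((hDudiff x hx).differentiableWithinAt (by norm_num)).differentiableAt
      (hs.mem_nhds hx)).clm_apply (differentiableAt_const _)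
  -- the vector field
  set f : Fin (n+1) → Euc n → ℝ := fun i z => φ z * φ z * u z * (Du z (e i)) with hf
  have hloc0 : ∀ (i : Fin (n+1)) x, x ∉ s → f i =ᶠ[nhds x] (fun _ => 0) := by
    intro i x hx
    have hxn : x ∉ tsupport φ := fun h => hx (hφs h)
    filter_upwards [(isClosed_tsupport φ).isOpen_compl.mem_nhds hxn] with z hz
    simp [hf, hφ0 z hz]
  have hd : ∀ (i : Fin (n+1)) x, DifferentiableAt ℝ (f i) x := by
    intro i x
    by_cases hx : x ∈ s
    · exact (((hφdiff x).mul (hφdiff x)).mul (hudiff x hx)).mul (hDidiff i x hx)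
    · exact (differentiableAt_const (0:ℝ)).congr_of_eventuallyEq (hloc0 i x hx)
  have hsupp : ∀ i, HasCompactSupport (f i) := by
    intro i
    apply HasCompactSupport.of_support_subset_isCompact hφc
    intro x hx
    by_contra hxn
    exact hx (by simp [hf, hφ0 x hxn])
  -- pointwise divergence identity
  set P : Euc n → ℝ := fun x => ∑ i, Du x (e i) * Dφ x (e i) with hP
  set A : Euc n → ℝ := fun x => (φ x)^2 * ‖Du x‖^2 with hA
  set B : Euc n → ℝ := fun x => 2 * φ x * u x * P x with hB
  set Cb : Euc n → ℝ := fun x => (u x)^2 * ‖Dφ x‖^2 with hCb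
  have hdiv : ∀ x, ∑ i, fderiv ℝ (f i) x (e i) = A x + B x := by
    intro x
    by_cases hx : x ∈ s
    · have hterm : ∀ i : Fin (n+1), fderiv ℝ (f i) x (e i) =
          (φ x * φ x * u x) * (fderiv ℝ (fun z => Du z (e i)) x (e i)) +
          (φ x)^2 * (Du x (e i))^2 + 2 * φ x * u x * (Du x (e i) * Dφ x (e i)) := by
        intro i
        have h1 : DifferentiableAt ℝ (fun z => φ z * φ z) x := (hφdiff x).mul (hφdiff x)
        have h2 : DifferentiableAt ℝ (fun z => φ z * φ z * u z) x := h1.mul (hudiff x hx)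
        have e1 : fderiv ℝ (f i) x = (φ x * φ x * u x) • fderiv ℝ (fun z => Du z (e i)) x +
            (Du x (e i)) • fderiv ℝ (fun z => φ z * φ z * u z) x :=
          fderiv_mul h2 (hDidiff i x hx)
        have e2 : fderiv ℝ (fun z => φ z * φ z * u z) x =
            (φ x * φ x) • Du x + u x • fderiv ℝ (fun z => φ z * φ z) x :=
          fderiv_mul h1 (hudiff x hx)
        have e3 : fderiv ℝ (fun z => φ z * φ z) x = φ x • Dφ x + φ x • Dφ x :=
          fderiv_mul (hφdiff x) (hφdiff x)
        rw [e1]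
        simp only [ContinuousLinearMap.add_apply, ContinuousLinearMap.coe_smul',
          Pi.smul_apply, smul_eq_mul, e2, e3]
        ring
      rw [Finset.sum_congr rfl (fun i _ => hterm i)]
      rw [Finset.sum_add_distrib, Finset.sum_add_distrib, ← Finset.mul_sum, ← Finset.mul_sum,
        ← Finset.mul_sum]
      have hl : ∑ i, fderiv ℝ (fun z => Du z (e i)) x (e i) = lap u x := rfl
      rw [hl, hlap x hx]
      have hsq : ∑ i, (Du x (e i))^2 = ‖Du x‖^2 := norm_clm_sq (Du x)
      rw [hsq]
      simp only [hA, hB, hP]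
      ring
    · have hz : ∀ i : Fin (n+1), fderiv ℝ (f i) x = 0 := by
        intro i
        rw [(hloc0 i x hx).fderiv_eq, fderiv_fun_const]
        rfl
      simp only [hz, ContinuousLinearMap.zero_apply, Finset.sum_const_zero]
      simp [hA, hB, hφ0' x hx]
  -- continuity and integrability
  have hcover : ∀ x : Euc n, x ∈ s ∨ x ∈ (tsupport φ)ᶜ :=
    fun x => (em (x ∈ s)).imp id (fun hx => fun h => hx (hφs h))
  have hopen : IsOpen (tsupport φ)ᶜ := (isClosed_tsupport φ).isOpen_compl
  have hAcont : Continuous A := by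
    apply cont_glue hs hopen _ _ hcover
    · exact ((hφcont.pow 2).continuousOn.mul ((hDucont.norm).pow 2))
    · intro x hx; simp [hA, hφ0 x hx]
  have hPcontOn : ContinuousOn P s := by
    apply continuousOn_finset_sum
    intro i _
    exact (hDucont.clm_apply continuousOn_const).mul (hDφcont.continuousOn.clm_apply
      continuousOn_const)
  have hBcont : Continuous B := by
    apply cont_glue hs hopen _ _ hcover
    · exact (((continuousOn_const.mul hφcont.continuousOn).mul hucont).mul hPcontOn)
    · intro x hx; simp [hB, hφ0 x hx]
  have hCbcont : Continuous Cb := by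
    apply cont_glue hs hopen _ _ hcover
    · exact ((hucont.pow 2).mul ((hDφcont.continuousOn.norm).pow 2))
    · intro x hx; simp [hCb, hDφ0 x hx]
  have hAsupp : HasCompactSupport A := by
    apply HasCompactSupport.of_support_subset_isCompact hφc
    intro x hx
    by_contra hxn
    exact hx (by simp [hA, hφ0 x hxn])
  have hBsupp : HasCompactSupport B := by
    apply HasCompactSupport.of_support_subset_isCompact hφc
    intro x hx
    by_contra hxn
    exact hx (by simp [hB, hφ0 x hxn])
  have hCbsupp : HasCompactSupport Cb := by
    apply HasCompactSupport.of_support_subset_isCompact hφc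
    intro x hx
    by_contra hxn
    exact hx (by simp [hCb, hDφ0 x hxn])
  have hAint : Integrable A := hAcont.integrable_of_hasCompactSupport hAsupp
  have hBint : Integrable B := hBcont.integrable_of_hasCompactSupport hBsupp
  have hCbint : Integrable Cb := hCbcont.integrable_of_hasCompactSupport hCbsupp
  -- IBP
  have hibp : ∫ x, ∑ i, fderiv ℝ (f i) x (e i) = 0 := by
    apply ibp f hd hsupp
    have : (fun x => ∑ i, fderiv ℝ (f i) x (EuclideanSpace.single i (1:ℝ))) = fun x => A x + B x :=
      funext hdiv
    rw [this]
    exact hAcont.add hBcont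
  have hintAB : (∫ x, A x) + ∫ x, B x = 0 := by
    rw [← integral_add hAint hBint]
    rw [← hibp]
    exact integral_congr_ae (Filter.Eventually.of_forall (fun x => (hdiv x).symm))
  -- pointwise bound
  have hptw : ∀ x, |B x| ≤ (1/2) * A x + 2 * Cb x := by
    intro x
    have hcs := Finset.sum_mul_sq_le_sq_mul_sq Finset.univ (fun i => Du x (e i))
      (fun i => Dφ x (e i))
    rw [norm_clm_sq (Du x), norm_clm_sq (Dφ x)] at hcs
    have hPsq : (P x)^2 ≤ (‖Du x‖ * ‖Dφ x‖)^2 := by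
      rw [mul_pow]; exact hcs
    have hP1 : |P x| ≤ ‖Du x‖ * ‖Dφ x‖ := by
      have h2 : (0:ℝ) ≤ ‖Du x‖ * ‖Dφ x‖ := by positivity
      nlinarith [abs_nonneg (P x), sq_abs (P x)]
    have hb : |B x| ≤ 2 * (|φ x| * |u x| * (‖Du x‖ * ‖Dφ x‖)) := by
      have : |B x| = 2 * (|φ x| * |u x| * |P x|) := by
        simp only [hB, abs_mul]
        rw [abs_of_nonneg (by norm_num : (0:ℝ) ≤ 2)]
        ring
      rw [this]
      have hnn : (0:ℝ) ≤ |φ x| * |u x| := by positivity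
      apply mul_le_mul_of_nonneg_left _ (by norm_num : (0:ℝ) ≤ 2)
      exact mul_le_mul_of_nonneg_left hP1 hnn
    simp only [hA, hCb]
    nlinarith [sq_nonneg (|φ x| * ‖Du x‖ - 2 * (|u x| * ‖Dφ x‖)), sq_abs (φ x), sq_abs (u x),
      abs_nonneg (φ x), abs_nonneg (u x), norm_nonneg (Du x), norm_nonneg (Dφ x)]
  have habs : |∫ x, B x| ≤ ∫ x, ((1/2) * A x + 2 * Cb x) := by
    calc |∫ x, B x| = ‖∫ x, B x‖ := (Real.norm_eq_abs _).symm
    _ ≤ ∫ x, ‖B x‖ := norm_integral_le_integral_norm _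
    _ = ∫ x, |B x| := by simp [Real.norm_eq_abs]
    _ ≤ ∫ x, ((1/2) * A x + 2 * Cb x) :=
        integral_mono hBint.abs ((hAint.const_mul _).add (hCbint.const_mul _)) hptw
  have hsplit : ∫ x, ((1/2) * A x + 2 * Cb x) = (1/2) * (∫ x, A x) + 2 * ∫ x, Cb x := by
    rw [integral_add (hAint.const_mul _) (hCbint.const_mul _)]
    simp only [← smul_eq_mul, integral_smul]
  constructor
  · exact hAint
  · have hIA : ∫ x, A x ≤ |∫ x, B x| := by
      have : ∫ x, A x = - ∫ x, B x := by linarith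
      rw [this]
      exact neg_le_abs _
    rw [hsplit] at habs
    have hfin : ∫ x, A x ≤ (1/2) * (∫ x, A x) + 2 * ∫ x, Cb x := le_trans hIA habs
    have : ∫ x, A x ≤ 4 * ∫ x, Cb x := by linarith
    exact this

lemma euc0_dist (z w : Euc 0) : dist z w = |z 0 - w 0| := by
  rw [EuclideanSpace.dist_eq, Fin.sum_univ_one, Real.dist_eq, sq_abs, Real.sqrt_sq_eq_abs]

lemma euc0_smul_single (z : Euc 0) : z = (z 0) • EuclideanSpace.single (0 : Fin 1) (1:ℝ) := by
  ext j
  have hj : j = 0 := Fin.eq_zero j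
  subst hj
  simp

set_option maxHeartbeats 1000000 in
lemma dim1_grad_zero {E : Set (Euc 0)} (hE : IsClosed E) (hEb : Bornology.IsBounded E)
    {u : Euc 0 → ℝ} (hu : HarmonicOn u Eᶜ) (hub : ∀ X, X ∉ E → |u X| ≤ 1)
    {y : Euc 0} (hy : y ∈ E) {X : Euc 0} (hX : Metric.diam E < dist X y) :
    fderiv ℝ u X = 0 := by
  classical
  set e : Euc 0 := EuclideanSpace.single (0 : Fin 1) (1:ℝ) with he
  have hne : ‖e‖ = 1 := by simp [he, EuclideanSpace.norm_single]
  set a : ℝ := Metric.diam E with ha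
  have ha0 : 0 ≤ a := Metric.diam_nonneg
  set σ : ℝ := if y 0 ≤ X 0 then 1 else -1 with hσ
  have hσ1 : |σ| = 1 := by
    rw [hσ]; split <;> simp
  have hσ0 : σ ≠ 0 := by
    rw [hσ]; split <;> norm_num
  set v : Euc 0 := σ • e with hv
  set γ : ℝ → Euc 0 := fun t => y + t • v with hγ
  have hγdist : ∀ t, dist (γ t) y = |t| := by
    intro t
    rw [euc0_dist]
    simp only [hγ, hv, he, PiLp.add_apply, PiLp.smul_apply, smul_eq_mul]
    rw [EuclideanSpace.single_apply]
    simp only [if_pos rfl]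
    rw [add_sub_cancel_left]
    rw [abs_mul, abs_mul, hσ1]
    simp
  have hγE : ∀ t, a < t → γ t ∉ E := by
    intro t hat hmem
    have := Metric.dist_le_diam_of_mem hEb hmem hy
    rw [hγdist] at this
    rw [abs_of_pos (lt_of_le_of_lt ha0 hat)] at this
    linarith
  set t₀ : ℝ := dist X y with ht₀
  have ht₀a : a < t₀ := hX
  have hγX : γ t₀ = X := by
    have h0 : t₀ = |X 0 - y 0| := by rw [ht₀, euc0_dist]
    have hst : σ * t₀ = X 0 - y 0 := by
      rw [h0, hσ]
      by_cases hxy : y 0 ≤ X 0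
      · rw [if_pos hxy, abs_of_nonneg (by linarith)]; ring
      · rw [if_neg hxy, abs_of_nonpos (by push_neg at hxy; linarith)]; ring
    ext j
    have hj : j = 0 := Fin.eq_zero j
    subst hj
    simp only [hγ, hv, he, PiLp.add_apply, PiLp.smul_apply, smul_eq_mul, ← mul_assoc, hst]
    rw [EuclideanSpace.single_apply]
    simp
    rw [mul_comm]
    linarith
  -- derivative of γ
  have hγd : ∀ t, HasDerivAt γ v t := by
    intro t
    have h := ((hasDerivAt_id t).smul_const v).const_add y
    simpa [hγ] using h
  have hsopen : IsOpen Eᶜ := hE.isOpen_compl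
  have hudiff : ∀ z ∈ Eᶜ, DifferentiableAt ℝ u z := fun z hz =>
    ((hu.1.contDiffAt (hsopen.mem_nhds hz))).differentiableAt (by norm_num)
  have hDudiff : ContDiffOn ℝ 1 (fderiv ℝ u) Eᶜ := hu.1.fderiv_of_isOpen hsopen (by norm_num)
  set w : ℝ → ℝ := fun t => fderiv ℝ u (γ t) v with hw
  -- w has zero derivative on Ioi a
  have hDdiff : ∀ z ∈ Eᶜ, DifferentiableAt ℝ (fun z' => fderiv ℝ u z' v) z := by
    intro z hz
    exact (((hDudiff z hz).differentiableWithinAt (by norm_num)).differentiableAt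
      (hsopen.mem_nhds hz)).clm_apply (differentiableAt_const _)
  have hlapz : ∀ z ∈ Eᶜ, fderiv ℝ (fun z' => fderiv ℝ u z' v) z v = 0 := by
    intro z hz
    have hfun : (fun z' => fderiv ℝ u z' v) = fun z' => σ * (fderiv ℝ u z' e) := by
      funext z'
      rw [hv, _root_.map_smul, smul_eq_mul]
    rw [hfun]
    have hD0 : DifferentiableAt ℝ (fun z' => fderiv ℝ u z' e) z := by
      exact (((hDudiff z hz).differentiableWithinAt (by norm_num)).differentiableAt
        (hsopen.mem_nhds hz)).clm_apply (differentiableAt_const _)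
    rw [fderiv_const_mul hD0 σ]
    have hlap0 := hu.2 z hz
    have : lap u z = fderiv ℝ (fun z' => fderiv ℝ u z' e) z e := by
      rw [lap, Fin.sum_univ_one, he]
    rw [this] at hlap0
    simp only [ContinuousLinearMap.coe_smul', Pi.smul_apply, smul_eq_mul]
    rw [hv, _root_.map_smul, smul_eq_mul, hlap0]
    ring
  have hwd : ∀ t ∈ Set.Ioi a, HasDerivAt w 0 t := by
    intro t hat
    have hz : γ t ∈ Eᶜ := hγE t hat
    have h1 : HasFDerivAt (fun z' => fderiv ℝ u z' v)
        (fderiv ℝ (fun z' => fderiv ℝ u z' v) (γ t)) (γ t) := (hDdiff _ hz).hasFDerivAt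
    have := h1.comp_hasDerivAt t (hγd t)
    rw [hlapz _ hz] at this
    exact this
  -- w is constant on Ioi a
  have hwconst : ∀ t ∈ Set.Ioi a, ∀ t' ∈ Set.Ioi a, w t = w t' := by
    intro t ht t' ht'
    have := Convex.norm_image_sub_le_of_norm_hasDerivWithin_le
      (f := w) (f' := fun _ => 0) (C := 0)
      (fun s hs => (hwd s hs).hasDerivWithinAt) (fun s _ => by simp) (convex_Ioi a) ht ht'
    simp only [Real.norm_eq_abs, zero_mul] at this
    have h9 : w t' - w t = 0 := by
      have h8 : |w t' - w t| ≤ 0 := this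
      have := abs_eq_zero.1 (le_antisymm h8 (abs_nonneg _))
      exact this
    linarith
  set k : ℝ := w (a + 1) with hk
  have hwk : ∀ t ∈ Set.Ioi a, w t = k := fun t ht =>
    hwconst t ht (a+1) (Set.mem_Ioi.2 (by linarith))
  -- v has derivative k on Ioi a
  have hvd : ∀ t ∈ Set.Ioi a, HasDerivAt (fun s => u (γ s)) k t := by
    intro t hat
    have hz : γ t ∈ Eᶜ := hγE t hat
    have h1 : HasFDerivAt u (fderiv ℝ u (γ t)) (γ t) := (hudiff _ hz).hasFDerivAt
    have h2 := h1.comp_hasDerivAt t (hγd t)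
    rw [show fderiv ℝ u (γ t) v = k from hwk t hat] at h2
    exact h2
  -- hence u ∘ γ is affine with slope k on Ioi a
  have haffine : ∀ t ∈ Set.Ioi a, u (γ t) - k * t = u (γ (a+1)) - k * (a+1) := by
    intro t ht
    have hD : ∀ s ∈ Set.Ioi a, HasDerivAt (fun s' => u (γ s') - k * s') 0 s := by
      intro s hs
      have := (hvd s hs).sub ((hasDerivAt_id s).const_mul k)
      simp only [mul_one, sub_self] at this
      exact this
    have := Convex.norm_image_sub_le_of_norm_hasDerivWithin_le
      (f := fun s' => u (γ s') - k * s') (f' := fun _ => 0) (C := 0)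
      (fun s hs => (hD s hs).hasDerivWithinAt) (fun s _ => by simp) (convex_Ioi a) ht
      (Set.mem_Ioi.2 (by linarith : a < a + 1))
    simp only [Real.norm_eq_abs, zero_mul] at this
    have h9 : (u (γ (a+1)) - k * (a+1)) - (u (γ t) - k * t) = 0 := by
      have h8 : |(u (γ (a+1)) - k * (a+1)) - (u (γ t) - k * t)| ≤ 0 := this
      exact abs_eq_zero.1 (le_antisymm h8 (abs_nonneg _))
    linarith
  -- boundedness forces k = 0
  have hk0 : k = 0 := by
    by_contra hkne
    set c : ℝ := u (γ (a+1)) - k * (a+1) with hc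
    have hval : ∀ t ∈ Set.Ioi a, u (γ t) = k * t + c := by
      intro t ht
      have h7 := haffine t ht
      have h6 : c = u (γ (a + 1)) - k * (a+1) := hc
      linarith
    set t1 : ℝ := max (a + 1) ((2 + |c|) / |k|) with ht1
    have ht1a : t1 ∈ Set.Ioi a := by
      simp only [Set.mem_Ioi, ht1, lt_max_iff]
      left; linarith
    have hb := hub (γ t1) (hγE t1 ht1a)
    rw [hval t1 ht1a] at hb
    have hkpos : 0 < |k| := abs_pos.2 hkne
    have ht1big : (2 + |c|) / |k| ≤ t1 := le_max_right _ _
    have ht1pos : 0 < t1 := lt_of_le_of_lt ha0 (Set.mem_Ioi.1 ht1a)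
    have hkt : 2 + |c| ≤ |k| * t1 := by
      rw [div_le_iff₀ hkpos] at ht1big
      linarith
    have habs2 : |k * t1| - |c| ≤ |k * t1 + c| := by
      have h5 := abs_add_le (k * t1 + c) (-c)
      simp only [add_neg_cancel_right, abs_neg] at h5
      linarith
    rw [abs_mul, abs_of_pos ht1pos] at habs2
    linarith
  -- conclude
  have hDuX : fderiv ℝ u X v = 0 := by
    have h5 := hwk t₀ (Set.mem_Ioi.2 ht₀a)
    simp only [hw] at h5
    rw [hγX, hk0] at h5
    exact h5
  have hDuXe : fderiv ℝ u X e = 0 := by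
    have h5 : fderiv ℝ u X v = σ * fderiv ℝ u X e := by
      rw [hv, _root_.map_smul, smul_eq_mul]
    rw [h5] at hDuX
    exact (mul_eq_zero.1 hDuX).resolve_left hσ0
  apply ContinuousLinearMap.ext
  intro z
  rw [ContinuousLinearMap.zero_apply]
  conv_lhs => rw [euc0_smul_single z]
  rw [_root_.map_smul, smul_eq_mul, ← he, hDuXe, mul_zero]

set_option maxHeartbeats 4000000 in
theorem statement2 (n : ℕ) :
    ∃ C : ℝ, 0 < C ∧
      ∀ (E : Set (Euc n)) (u : Euc n → ℝ),
        IsClosed E → E.Nonempty → Bornology.IsBounded E →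
        HarmonicOn u Eᶜ → (∀ X, X ∉ E → |u X| ≤ 1) →
        ∀ y ∈ E, ∀ r : ℝ, 100 * Metric.diam E ≤ r →
          ∫⁻ X in Metric.ball y r \ Metric.ball y (10 * Metric.diam E),
              ENNReal.ofReal (‖fderiv ℝ u X‖ ^ 2 * Metric.infDist X E) ≤
            ENNReal.ofReal (C * r ^ n) := by
  classical
  cases n with
  | zero =>
    refine ⟨1, one_pos, ?_⟩
    intro E u hE hEne hEb hu hub y hy r hr
    have hmain : ∀ X ∈ Metric.ball y r \ Metric.ball y (10 * Metric.diam E),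
        ENNReal.ofReal (‖fderiv ℝ u X‖ ^ 2 * Metric.infDist X E) = 0 := by
      intro X hX
      rcases eq_or_ne X y with rfl | hXy
      · rw [Metric.infDist_zero_of_mem hy, mul_zero, ENNReal.ofReal_zero]
      · have hd10 : 10 * Metric.diam E ≤ dist X y := not_lt.1 (fun h => hX.2 (mem_ball.2 h))
        have hdd : Metric.diam E < dist X y := by
          by_cases hdE : Metric.diam E = 0
          · rw [hdE]; exact dist_pos.2 hXy
          · have h1 : 0 < Metric.diam E := lt_of_le_of_ne Metric.diam_nonneg (Ne.symm hdE)
            linarith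
        rw [dim1_grad_zero hE hEb hu hub hy hdd]
        simp
    have hzero : ∫⁻ X in Metric.ball y r \ Metric.ball y (10 * Metric.diam E),
        ENNReal.ofReal (‖fderiv ℝ u X‖ ^ 2 * Metric.infDist X E) = 0 := by
      rw [setLIntegral_congr_fun (measurableSet_ball.diff measurableSet_ball)
        hmain]
      simp
    rw [hzero]
    exact bot_le
  | succ m =>
    obtain ⟨M, hMpos, hcut⟩ := cutoff (n := m + 1)
    set V : ℝ := (volume (ball (0 : Euc (m+1)) 1)).toReal with hV
    have hV0 : 0 ≤ V := ENNReal.toReal_nonneg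
    set K : ℝ := 4 * M^2 * 2^(m+2) * V + 1 with hK
    have hKpos : 0 < K := by positivity
    refine ⟨2 * K, by positivity, ?_⟩
    intro E u hE hEne hEb hu hub y hy r hr
    by_cases hr0 : r ≤ 0
    · have hbe : Metric.ball y r = ∅ := ball_eq_empty.2 hr0
      rw [hbe, Set.empty_diff]
      simp
    push_neg at hr0
    set g : Euc (m+1) → ℝ≥0∞ :=
      fun X => ENNReal.ofReal (‖fderiv ℝ u X‖^2 * Metric.infDist X E) with hg
    set dE := Metric.diam E with hdE
    have hdE0 : 0 ≤ dE := Metric.diam_nonneg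
    set A := Metric.ball y r \ Metric.ball y (10 * dE) with hA
    set ρ : ℕ → ℝ := fun k => r / 2^k with hρ
    have hρpos : ∀ k, 0 < ρ k := fun k => by rw [hρ]; positivity
    have hhalf : ∀ k, ρ k / 2 = r / 2^(k+1) := by
      intro k; rw [hρ]; rw [div_div, ← pow_succ]
    set S : ℕ → Set (Euc (m+1)) := fun k => {X | ρ k / 2 ≤ dist X y ∧ dist X y ≤ ρ k} with hS
    -- cover
    have hcover : A ⊆ {y} ∪ ⋃ k, (S k ∩ A) := by
      intro X hX
      rcases eq_or_ne X y with rfl | hXy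
      · exact Or.inl rfl
      · apply Or.inr
        have hd0 : 0 < dist X y := dist_pos.2 hXy
        have hdr : dist X y < r := mem_ball.1 hX.1
        have hex : ∃ k : ℕ, r / 2^(k+1) < dist X y := by
          obtain ⟨k, hk⟩ := pow_unbounded_of_one_lt (r / dist X y) (by norm_num : (1:ℝ) < 2)
          rw [div_lt_iff₀ hd0] at hk
          refine ⟨k, ?_⟩
          rw [div_lt_iff₀ (by positivity : (0:ℝ) < 2^(k+1))]
          have h2 : (2:ℝ)^k ≤ 2^(k+1) := by
            apply pow_le_pow_right₀ (by norm_num)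
            omega
          nlinarith [hd0]
        set k := Nat.find hex with hkdef
        have hfind : r / 2^(k+1) < dist X y := Nat.find_spec hex
        have hup : dist X y ≤ ρ k := by
          rcases Nat.eq_zero_or_pos k with hk2 | hk2
          · rw [hρ, hk2]; simpa using hdr.le
          · have hmin := Nat.find_min hex
              (show k - 1 < Nat.find hex by rw [← hkdef]; omega)
            push_neg at hmin
            have hkk : k - 1 + 1 = k := Nat.succ_pred_eq_of_pos hk2
            rw [hkk] at hmin
            rw [hρ]
            exact hmin
        refine Set.mem_iUnion.2 ⟨k, ⟨⟨?_, hup⟩, hX⟩⟩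
        rw [hhalf k]
        exact hfind.le
    -- per-shell bound
    have hshell : ∀ k, ∫⁻ X in S k ∩ A, g X ≤ ENNReal.ofReal (K * (ρ k)^(m+1)) := by
      intro k
      by_cases hSA : (S k ∩ A).Nonempty
      swap
      · rw [Set.not_nonempty_iff_eq_empty.1 hSA]
        simp
      obtain ⟨Z, hZS, hZA⟩ := hSA
      have h10 : 10 * dE ≤ dist Z y := not_lt.1 (fun h => hZA.2 (mem_ball.2 h))
      have hdistZ : dist Z y ≤ ρ k := hZS.2
      have hdEρ : dE < ρ k / 4 := by
        have := hρpos k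
        linarith
      obtain ⟨φ, hφ2, hφc, hφ01, hφ1, hφts, hφgrad⟩ := hcut y (ρ k) (hρpos k)
      have hsub : tsupport φ ⊆ Eᶜ := by
        intro x hx hxE
        have h1 := (hφts hx).1
        have h2 := Metric.dist_le_diam_of_mem hEb hxE hy
        rw [← hdE] at h2
        linarith
      obtain ⟨hint, hineq⟩ := cacc hE.isOpen_compl hu.1 hu.2 hφ2 hφc hsub
      have hDφ0 : ∀ x, x ∉ tsupport φ → fderiv ℝ φ x = 0 :=
        fun x hx => support_fderiv_sub x hx
      have hJ1 : ∀ x, x ∉ Metric.closedBall y (2 * ρ k) →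
          u x^2 * ‖fderiv ℝ φ x‖^2 = 0 := by
        intro x hx
        have hxn : x ∉ tsupport φ := fun h => hx (mem_closedBall.2 (hφts h).2)
        rw [hDφ0 x hxn]
        simp
      have hJ2 : ∫ x, u x^2 * ‖fderiv ℝ φ x‖^2 =
          ∫ x in Metric.closedBall y (2*ρ k), u x^2 * ‖fderiv ℝ φ x‖^2 :=
        (setIntegral_eq_integral_of_forall_compl_eq_zero hJ1).symm
      have hMρ : (0:ℝ) ≤ (M / ρ k)^2 := sq_nonneg _
      have hCbcont : Continuous (fun x => u x^2 * ‖fderiv ℝ φ x‖^2) := by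
        apply cont_glue hE.isOpen_compl (isClosed_tsupport φ).isOpen_compl
        · exact ((hu.1.continuousOn.pow 2).mul
            ((((hφ2.continuous_fderiv (by norm_num)).continuousOn).norm).pow 2))
        · intro x hx
          rw [hDφ0 x hx]
          simp
        · intro x
          by_cases hxE : x ∈ Eᶜ
          · exact Or.inl hxE
          · refine Or.inr (fun hmem => hxE (hsub hmem))
      have hJ3 : ∫ x in Metric.closedBall y (2*ρ k), u x^2 * ‖fderiv ℝ φ x‖^2 ≤
          (M / ρ k)^2 * (volume (Metric.closedBall y (2*ρ k))).toReal := by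
        have hb := norm_setIntegral_le_of_norm_le_const (μ := volume)
          (s := Metric.closedBall y (2*ρ k)) (C := (M/ρ k)^2)
          (f := fun x => u x^2 * ‖fderiv ℝ φ x‖^2) measure_closedBall_lt_top ?_
        · calc ∫ x in Metric.closedBall y (2*ρ k), u x^2 * ‖fderiv ℝ φ x‖^2
              ≤ |∫ x in Metric.closedBall y (2*ρ k), u x^2 * ‖fderiv ℝ φ x‖^2| := le_abs_self _
          _ = ‖∫ x in Metric.closedBall y (2*ρ k), u x^2 * ‖fderiv ℝ φ x‖^2‖ :=
              (Real.norm_eq_abs _).symm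
          _ ≤ (M/ρ k)^2 * (volume (Metric.closedBall y (2*ρ k))).toReal := hb
        · intro x _
          rw [Real.norm_eq_abs, abs_of_nonneg (by positivity)]
          by_cases hxE : x ∈ E
          · have hxn : x ∉ tsupport φ := fun h => (hsub h) hxE
            rw [hDφ0 x hxn]
            simpa using hMρ
          · have h1 : |u x| ≤ 1 := hub x hxE
            have h2 : ‖fderiv ℝ φ x‖ ≤ M / ρ k := hφgrad x
            have h3 : u x^2 ≤ 1 := by
              rw [← sq_abs]
              nlinarith [abs_nonneg (u x)]
            have h4 : ‖fderiv ℝ φ x‖^2 ≤ (M/ρ k)^2 := by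
              nlinarith [norm_nonneg (fderiv ℝ φ x)]
            nlinarith [sq_nonneg (‖fderiv ℝ φ x‖), sq_nonneg (u x)]
      have hvol : (volume (Metric.closedBall y (2*ρ k))).toReal = (2*ρ k)^(m+2) * V := by
        rw [MeasureTheory.Measure.addHaar_closedBall volume y
          (by positivity : (0:ℝ) ≤ 2 * ρ k)]
        rw [ENNReal.toReal_mul, ENNReal.toReal_ofReal (by positivity)]
        rw [← hV]
        norm_num [finrank_euclideanSpace_fin]
      have hmeas : Measurable (fun x => ENNReal.ofReal (φ x^2 * ‖fderiv ℝ u x‖^2)) := by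
        apply Measurable.ennreal_ofReal
        exact ((hφ2.continuous.measurable.pow_const 2).mul
          ((measurable_fderiv ℝ u).norm.pow_const 2))
      have hstep1 : ∫⁻ X in S k ∩ A, g X ≤
          ∫⁻ X in S k ∩ A, ENNReal.ofReal (ρ k) *
            ENNReal.ofReal (φ X^2 * ‖fderiv ℝ u X‖^2) := by
        apply setLIntegral_mono (measurable_const.mul hmeas)
        intro X hX
        have hφX : φ X = 1 := hφ1 X hX.1.1 hX.1.2
        have hδ : Metric.infDist X E ≤ ρ k :=
          le_trans (Metric.infDist_le_dist_of_mem hy) hX.1.2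
        simp only [hg, Pi.mul_apply]
        rw [← ENNReal.ofReal_mul (hρpos k).le]
        apply ENNReal.ofReal_le_ofReal
        rw [hφX, one_pow, one_mul, mul_comm (ρ k) _]
        exact mul_le_mul_of_nonneg_left hδ (sq_nonneg _)
      have hstep2 : ∫⁻ X in S k ∩ A, ENNReal.ofReal (ρ k) *
            ENNReal.ofReal (φ X^2 * ‖fderiv ℝ u X‖^2) =
          ENNReal.ofReal (ρ k) *
            ∫⁻ X in S k ∩ A, ENNReal.ofReal (φ X^2 * ‖fderiv ℝ u X‖^2) :=
        lintegral_const_mul _ hmeas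
      have hstep3 : ∫⁻ X in S k ∩ A, ENNReal.ofReal (φ X^2 * ‖fderiv ℝ u X‖^2) ≤
          ∫⁻ X, ENNReal.ofReal (φ X^2 * ‖fderiv ℝ u X‖^2) :=
        setLIntegral_le_lintegral _ _
      have hstep4 : ∫⁻ X, ENNReal.ofReal (φ X^2 * ‖fderiv ℝ u X‖^2) =
          ENNReal.ofReal (∫ x, φ x^2 * ‖fderiv ℝ u x‖^2) :=
        (ofReal_integral_eq_lintegral_ofReal hint
          (Filter.Eventually.of_forall (fun x => by positivity))).symm
      have hstep5 : (∫ x, φ x^2 * ‖fderiv ℝ u x‖^2) ≤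
          4 * ((M/ρ k)^2 * ((2*ρ k)^(m+2) * V)) := by
        calc (∫ x, φ x^2 * ‖fderiv ℝ u x‖^2) ≤ 4 * ∫ x, u x^2 * ‖fderiv ℝ φ x‖^2 := hineq
        _ ≤ 4 * ((M/ρ k)^2 * ((2*ρ k)^(m+2) * V)) := by
            apply mul_le_mul_of_nonneg_left _ (by norm_num : (0:ℝ) ≤ 4)
            rw [hJ2]
            calc ∫ x in Metric.closedBall y (2*ρ k), u x^2 * ‖fderiv ℝ φ x‖^2 ≤
                (M / ρ k)^2 * (volume (Metric.closedBall y (2*ρ k))).toReal := hJ3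
            _ = (M/ρ k)^2 * ((2*ρ k)^(m+2) * V) := by rw [hvol]
      have hreal : ρ k * (4 * ((M/ρ k)^2 * ((2*ρ k)^(m+2) * V))) ≤ K * (ρ k)^(m+1) := by
        have hne := (hρpos k).ne'
        have hid : ρ k * (4 * ((M/ρ k)^2 * ((2*ρ k)^(m+2) * V))) =
            (4 * M^2 * 2^(m+2) * V) * (ρ k)^(m+1) := by
          rw [mul_pow, div_pow]
          field_simp
          ring
        rw [hid, hK]
        apply mul_le_mul_of_nonneg_right _ (by positivity)
        linarith
      calc ∫⁻ X in S k ∩ A, g X ≤ ENNReal.ofReal (ρ k) *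
            ∫⁻ X in S k ∩ A, ENNReal.ofReal (φ X^2 * ‖fderiv ℝ u X‖^2) := by
            rw [← hstep2]; exact hstep1
      _ ≤ ENNReal.ofReal (ρ k) * ENNReal.ofReal (∫ x, φ x^2 * ‖fderiv ℝ u x‖^2) := by
            rw [← hstep4]
            exact mul_le_mul_right hstep3 _
      _ ≤ ENNReal.ofReal (ρ k) *
            ENNReal.ofReal (4 * ((M/ρ k)^2 * ((2*ρ k)^(m+2) * V))) :=
            mul_le_mul_right (ENNReal.ofReal_le_ofReal hstep5) _
      _ = ENNReal.ofReal (ρ k * (4 * ((M/ρ k)^2 * ((2*ρ k)^(m+2) * V)))) :=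
            (ENNReal.ofReal_mul (hρpos k).le).symm
      _ ≤ ENNReal.ofReal (K * (ρ k)^(m+1)) := ENNReal.ofReal_le_ofReal hreal
    -- summation
    have hterm : ∀ k : ℕ, ENNReal.ofReal (K * (ρ k)^(m+1)) =
        ENNReal.ofReal (K * r^(m+1)) * (ENNReal.ofReal ((1:ℝ)/2^(m+1)))^k := by
      intro k
      rw [← ENNReal.ofReal_pow (by positivity), ← ENNReal.ofReal_mul (by positivity)]
      congr 1
      have hpp : ((2:ℝ)^k)^(m+1) = ((2:ℝ)^(m+1))^k := by
        rw [← pow_mul, ← pow_mul, Nat.mul_comm]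
      have hfrac : (r / 2^k)^(m+1) = r^(m+1) * ((1:ℝ)/2^(m+1))^k := by
        rw [div_pow, hpp, div_eq_mul_inv, one_div, inv_pow]
      simp only [hρ]
      rw [hfrac, mul_assoc]
    have hgeom : ∑' k : ℕ, (ENNReal.ofReal ((1:ℝ)/2^(m+1)))^k ≤ 2 := by
      rw [ENNReal.tsum_geometric]
      have hq : ENNReal.ofReal ((1:ℝ)/2^(m+1)) ≤ 2⁻¹ := by
        have h1 : (1:ℝ)/2^(m+1) ≤ 1/2 := by
          apply div_le_div_of_nonneg_left one_pos.le (by norm_num)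
          calc (2:ℝ) = 2^1 := (pow_one 2).symm
          _ ≤ 2^(m+1) := by
              apply pow_le_pow_right₀ (by norm_num)
              omega
        calc ENNReal.ofReal ((1:ℝ)/2^(m+1)) ≤ ENNReal.ofReal ((1:ℝ)/2) :=
              ENNReal.ofReal_le_ofReal h1
        _ = 2⁻¹ := by
              rw [one_div, ENNReal.ofReal_inv_of_pos (by norm_num : (0:ℝ) < 2)]
              norm_num
      have h2 : (2:ℝ≥0∞)⁻¹ ≤ 1 - ENNReal.ofReal ((1:ℝ)/2^(m+1)) := by
        have h3 : (1:ℝ≥0∞) - 2⁻¹ = 2⁻¹ := by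
          rw [ENNReal.one_sub_inv_two]
        rw [← h3]
        exact tsub_le_tsub_left hq 1
      calc (1 - ENNReal.ofReal ((1:ℝ)/2^(m+1)))⁻¹ ≤ (2⁻¹:ℝ≥0∞)⁻¹ :=
            ENNReal.inv_le_inv.2 h2
      _ = 2 := by rw [inv_inv]
    have hsum : ∑' k, ENNReal.ofReal (K * (ρ k)^(m+1)) ≤
        ENNReal.ofReal (2 * K * r^(m+1)) := by
      calc ∑' k, ENNReal.ofReal (K * (ρ k)^(m+1))
          = ∑' k, ENNReal.ofReal (K * r^(m+1)) * (ENNReal.ofReal ((1:ℝ)/2^(m+1)))^k :=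
            tsum_congr hterm
      _ = ENNReal.ofReal (K * r^(m+1)) * ∑' k, (ENNReal.ofReal ((1:ℝ)/2^(m+1)))^k :=
            ENNReal.tsum_mul_left
      _ ≤ ENNReal.ofReal (K * r^(m+1)) * 2 := mul_le_mul_right hgeom _
      _ = ENNReal.ofReal (2 * K * r^(m+1)) := by
            rw [mul_comm (ENNReal.ofReal (K * r^(m+1))) 2]
            rw [show (2:ℝ≥0∞) = ENNReal.ofReal 2 by norm_num]
            rw [← ENNReal.ofReal_mul (by norm_num : (0:ℝ) ≤ 2)]
            congr 1
            ring
    calc ∫⁻ X in A, g X ≤ ∫⁻ X in ({y} ∪ ⋃ k, S k ∩ A), g X := lintegral_mono_set hcover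
    _ ≤ (∫⁻ X in ({y} : Set (Euc (m+1))), g X) + ∫⁻ X in ⋃ k, S k ∩ A, g X :=
          lintegral_union_le _ _ _
    _ ≤ 0 + ∑' k, ∫⁻ X in S k ∩ A, g X := by
          apply add_le_add
          · exact le_of_eq (setLIntegral_measure_zero _ _ (measure_singleton y))
          · exact lintegral_iUnion_le _ _
    _ ≤ 0 + ∑' k, ENNReal.ofReal (K * (ρ k)^(m+1)) :=
          add_le_add le_rfl (ENNReal.tsum_le_tsum hshell)
    _ ≤ ENNReal.ofReal (2 * K * r^(m+1)) := by rw [zero_add]; exact hsum
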